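/- Let $k$ be a field, $S = k[x,y,z,w]$, $n_1, n_2 \ge 2$, $I = (x,y)^{n_1} + (z,w)^{n_2} + (xz-yw)$, and $A = S/I$. If $p, q \in A$ satisfy $\bar{y} p = \bar{x} q$, then there exist $p', q' \in \mathrm{Ann}_A(\bar{x})$ and elements $r_y, r_w \in A$ such that $p = p' + \bar{x} r_y + \bar{w} r_w$ and $q = q' + \bar{y} r_y + \bar{z} r_w$. -/
import Mathlib

open MvPolynomial

noncomputable def phi01 (k : Type*) [CommSemiring k] :
    MvPolynomial (Fin 4) k →ₐ[k] MvPolynomial (Fin 4) k :=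
  aeval ![0, 0, X 2, X 3]

noncomputable def phi0 (k : Type*) [CommSemiring k] :
    MvPolynomial (Fin 4) k →ₐ[k] MvPolynomial (Fin 4) k :=
  aeval ![0, X 1, X 2, X 3]

section aux
variable {k : Type*} [CommRing k]

@[simp] lemma phi01_X0 : phi01 k (X 0) = 0 := by simp [phi01]
@[simp] lemma phi01_X1 : phi01 k (X 1) = 0 := by simp [phi01]
@[simp] lemma phi01_X2 : phi01 k (X 2) = X 2 := by simp [phi01]
@[simp] lemma phi01_X3 : phi01 k (X 3) = X 3 := by simp [phi01]
@[simp] lemma phi0_X0 : phi0 k (X 0) = 0 := by simp [phi0]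
@[simp] lemma phi0_X1 : phi0 k (X 1) = X 1 := by simp [phi0]

lemma phi01_decomp (F : MvPolynomial (Fin 4) k) :
    ∃ a b, F = phi01 k F + X 0 * b + X 1 * a := by
  induction F using MvPolynomial.induction_on with
  | C a => exact ⟨0, 0, by simp [phi01]⟩
  | add p q hp hq =>
    obtain ⟨ap, bp, hp⟩ := hp
    obtain ⟨aq, bq, hq⟩ := hq
    exact ⟨ap + aq, bp + bq, by rw [map_add]; linear_combination hp + hq⟩
  | mul_X p i hp =>
    obtain ⟨a, b, hp⟩ := hp
    fin_cases i
    · refine ⟨0, p, ?_⟩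
      show p * X 0 = phi01 k (p * X 0) + X 0 * p + X 1 * 0
      rw [map_mul, phi01_X0]; ring
    · refine ⟨p, 0, ?_⟩
      show p * X 1 = phi01 k (p * X 1) + X 0 * 0 + X 1 * p
      rw [map_mul, phi01_X1]; ring
    · refine ⟨a * X 2, b * X 2, ?_⟩
      show p * X 2 = phi01 k (p * X 2) + X 0 * (b * X 2) + X 1 * (a * X 2)
      rw [map_mul, phi01_X2]; linear_combination (X 2 : MvPolynomial (Fin 4) k) * hp
    · refine ⟨a * X 3, b * X 3, ?_⟩
      show p * X 3 = phi01 k (p * X 3) + X 0 * (b * X 3) + X 1 * (a * X 3)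
      rw [map_mul, phi01_X3]; linear_combination (X 3 : MvPolynomial (Fin 4) k) * hp

lemma phi0_decomp (F : MvPolynomial (Fin 4) k) :
    ∃ c, F = phi0 k F + X 0 * c := by
  induction F using MvPolynomial.induction_on with
  | C a => exact ⟨0, by simp [phi0]⟩
  | add p q hp hq =>
    obtain ⟨cp, hp⟩ := hp
    obtain ⟨cq, hq⟩ := hq
    exact ⟨cp + cq, by rw [map_add]; linear_combination hp + hq⟩
  | mul_X p i hp =>
    obtain ⟨c, hp⟩ := hp
    fin_cases i
    · refine ⟨p, ?_⟩
      show p * X 0 = phi0 k (p * X 0) + X 0 * p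
      rw [map_mul, phi0_X0]; ring
    · refine ⟨c * X 1, ?_⟩
      show p * X 1 = phi0 k (p * X 1) + X 0 * (c * X 1)
      rw [map_mul, phi0_X1]; linear_combination (X 1 : MvPolynomial (Fin 4) k) * hp
    · refine ⟨c * X 2, ?_⟩
      show p * X 2 = phi0 k (p * X 2) + X 0 * (c * X 2)
      rw [map_mul, show phi0 k (X 2) = X 2 by simp [phi0]]
      linear_combination (X 2 : MvPolynomial (Fin 4) k) * hp
    · refine ⟨c * X 3, ?_⟩
      show p * X 3 = phi0 k (p * X 3) + X 0 * (c * X 3)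
      rw [map_mul, show phi0 k (X 3) = X 3 by simp [phi0]]
      linear_combination (X 3 : MvPolynomial (Fin 4) k) * hp

lemma pow_pair_decomp {R : Type*} [CommRing R] (α β : R) (m : ℕ) {F : R}
    (hF : F ∈ (Ideal.span {α, β}) ^ (m + 1)) :
    ∃ A ∈ (Ideal.span {α, β}) ^ m, ∃ B ∈ (Ideal.span {α, β}) ^ m,
      F = α * B + β * A := by
  rw [pow_succ] at hF
  refine Submodule.mul_induction_on hF ?_ ?_
  · intro a ha b hb
    rw [Ideal.mem_span_pair] at hb
    obtain ⟨u, v, huv⟩ := hb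
    exact ⟨v * a, Ideal.mul_mem_left _ _ ha, u * a, Ideal.mul_mem_left _ _ ha,
      by linear_combination -a * huv⟩
  · rintro r s ⟨A1, hA1, B1, hB1, h1⟩ ⟨A2, hA2, B2, hB2, h2⟩
    exact ⟨A1 + A2, add_mem hA1 hA2, B1 + B2, add_mem hB1 hB2,
      by linear_combination h1 + h2⟩

lemma L_pow_decomp (n : ℕ) :
    ∀ F ∈ (Ideal.span {X 2, X 3} : Ideal (MvPolynomial (Fin 4) k)) ^ n,
      ∃ A ∈ (Ideal.span {X 2, X 3} : Ideal (MvPolynomial (Fin 4) k)) ^ n,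
        ∃ B ∈ (Ideal.span {X 2, X 3} : Ideal (MvPolynomial (Fin 4) k)) ^ n,
          F = phi01 k F + X 0 * B + X 1 * A := by
  induction n with
  | zero =>
    intro F _
    obtain ⟨a, b, h⟩ := phi01_decomp F
    exact ⟨a, by simp, b, by simp, h⟩
  | succ n ih =>
    intro F hF
    rw [pow_succ'] at hF
    have key : ∃ A ∈ (Ideal.span {X 2, X 3} : Ideal (MvPolynomial (Fin 4) k)) *
          (Ideal.span {X 2, X 3}) ^ n,
        ∃ B ∈ (Ideal.span {X 2, X 3} : Ideal (MvPolynomial (Fin 4) k)) *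
          (Ideal.span {X 2, X 3}) ^ n,
          F = phi01 k F + X 0 * B + X 1 * A := by
      refine Submodule.mul_induction_on hF ?_ ?_
      · intro g hg h hh
        obtain ⟨Ah, hAh, Bh, hBh, hh'⟩ := ih h hh
        have hPh : phi01 k h ∈ (Ideal.span {X 2, X 3} :
            Ideal (MvPolynomial (Fin 4) k)) ^ n := by
          have : phi01 k h = h - X 0 * Bh - X 1 * Ah := by linear_combination -hh'
          rw [this]
          exact sub_mem (sub_mem hh (Ideal.mul_mem_left _ _ hBh))
            (Ideal.mul_mem_left _ _ hAh)
        have hg' := hg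
        rw [Ideal.mem_span_pair] at hg'
        obtain ⟨c, d, hcd⟩ := hg'
        obtain ⟨ac, bc, hc⟩ := phi01_decomp c
        obtain ⟨ad, bd, hd⟩ := phi01_decomp d
        have hX2 : (X 2 : MvPolynomial (Fin 4) k) ∈ Ideal.span {X 2, X 3} :=
          Ideal.subset_span (by simp)
        have hX3 : (X 3 : MvPolynomial (Fin 4) k) ∈ Ideal.span {X 2, X 3} :=
          Ideal.subset_span (by simp)
        refine ⟨ac * (X 2 * phi01 k h) + ad * (X 3 * phi01 k h) + g * Ah,
          add_mem (add_mem (Ideal.mul_mem_left _ _ (Ideal.mul_mem_mul hX2 hPh))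
            (Ideal.mul_mem_left _ _ (Ideal.mul_mem_mul hX3 hPh)))
            (Ideal.mul_mem_mul hg hAh),
          bc * (X 2 * phi01 k h) + bd * (X 3 * phi01 k h) + g * Bh,
          add_mem (add_mem (Ideal.mul_mem_left _ _ (Ideal.mul_mem_mul hX2 hPh))
            (Ideal.mul_mem_left _ _ (Ideal.mul_mem_mul hX3 hPh)))
            (Ideal.mul_mem_mul hg hBh), ?_⟩
        have hPg : phi01 k g = phi01 k c * X 2 + phi01 k d * X 3 := by
          rw [← hcd]; rw [map_add, map_mul, map_mul, phi01_X2, phi01_X3]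
        rw [map_mul, hPg]
        linear_combination g * hh' + (X 2 * phi01 k h) * hc +
          (X 3 * phi01 k h) * hd - phi01 k h * hcd
      · rintro r s ⟨A1, hA1, B1, hB1, h1⟩ ⟨A2, hA2, B2, hB2, h2⟩
        exact ⟨A1 + A2, add_mem hA1 hA2, B1 + B2, add_mem hB1 hB2,
          by rw [map_add]; linear_combination h1 + h2⟩
    obtain ⟨A, hA, B, hB, h⟩ := key
    rw [← pow_succ'] at hA hB
    exact ⟨A, hA, B, hB, h⟩

end aux

theorem stmt15 (k : Type*) [Field k] (n1 n2 : ℕ) (h1 : 2 ≤ n1) (h2 : 2 ≤ n2)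
    (I : Ideal (MvPolynomial (Fin 4) k))
    (hI : I = (Ideal.span {X 0, X 1}) ^ n1 + (Ideal.span {X 2, X 3}) ^ n2
        + Ideal.span {X 0 * X 2 - X 1 * X 3}) :
    ∀ p q : MvPolynomial (Fin 4) k ⧸ I,
      Ideal.Quotient.mk I (X 1) * p = Ideal.Quotient.mk I (X 0) * q →
      ∃ p' q' ry rw : MvPolynomial (Fin 4) k ⧸ I,
        Ideal.Quotient.mk I (X 0) * p' = 0 ∧
        Ideal.Quotient.mk I (X 0) * q' = 0 ∧
        p = p' + Ideal.Quotient.mk I (X 0) * ry + Ideal.Quotient.mk I (X 3) * rw ∧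
        q = q' + Ideal.Quotient.mk I (X 1) * ry + Ideal.Quotient.mk I (X 2) * rw := by
  intro p q hpq
  obtain ⟨P, hP⟩ := Ideal.Quotient.mk_surjective p
  obtain ⟨Q, hQ⟩ := Ideal.Quotient.mk_surjective q
  -- membership of X1*P - X0*Q in I
  have hmem : X 1 * P - X 0 * Q ∈ I := by
    rw [← Ideal.Quotient.eq_zero_iff_mem, map_sub, map_mul, map_mul, hP, hQ,
      hpq, sub_self]
  rw [hI, Submodule.add_eq_sup, Submodule.add_eq_sup, Submodule.mem_sup] at hmem
  obtain ⟨F12, hF12, Gf, hGf, heq0⟩ := hmem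
  rw [Submodule.mem_sup] at hF12
  obtain ⟨F1, hF1, F2, hF2, heq12⟩ := hF12
  rw [Ideal.mem_span_singleton'] at hGf
  obtain ⟨G, hG⟩ := hGf
  -- replace P, Q by P1 = P + G*X3, Q1 = Q + G*X2
  have eq1 : X 1 * (P + G * X 3) - X 0 * (Q + G * X 2) = F1 + F2 := by
    linear_combination -heq0 - heq12 - hG
  -- decompose F1
  obtain ⟨m1, rfl⟩ : ∃ m, n1 = m + 1 := ⟨n1 - 1, by omega⟩
  obtain ⟨A1, hA1, B1, hB1, hF1d⟩ := pow_pair_decomp (X 0) (X 1) m1 hF1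
  -- phi01 of F2 is zero
  have hphiF2 : phi01 k F2 = 0 := by
    have eq1' := eq1
    rw [hF1d] at eq1'
    have := congrArg (phi01 k) eq1'
    simp only [map_sub, map_add, map_mul, phi01_X0, phi01_X1, zero_mul,
      mul_zero, zero_add, add_zero, sub_self, sub_zero, zero_sub] at this
    exact this.symm
  -- decompose F2
  obtain ⟨A2, hA2, B2, hB2, hF2d⟩ := L_pow_decomp n2 F2 hF2
  rw [hphiF2, zero_add] at hF2d
  -- the key exact equation in the polynomial ring
  have E : X 1 * ((P + G * X 3) - (A1 + A2)) =
      X 0 * ((Q + G * X 2) + (B1 + B2)) := by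
    linear_combination eq1 + hF1d + hF2d
  -- divide by X 0 using phi0
  have hker : phi0 k ((P + G * X 3) - (A1 + A2)) = 0 := by
    have := congrArg (phi0 k) E
    rw [map_mul, map_mul, phi0_X0, phi0_X1, zero_mul] at this
    rcases mul_eq_zero.mp this with h | h
    · exact absurd h (X_ne_zero 1)
    · exact h
  obtain ⟨C, hC⟩ := phi0_decomp ((P + G * X 3) - (A1 + A2))
  rw [hker, zero_add] at hC
  have hT : (Q + G * X 2) + (B1 + B2) = X 1 * C := by
    have h0 : (X 0 : MvPolynomial (Fin 4) k) ≠ 0 := X_ne_zero 0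
    apply mul_left_cancel₀ h0
    rw [← E, hC]; ring
  -- memberships in I
  have hKle : (Ideal.span {X 0, X 1} : Ideal (MvPolynomial (Fin 4) k)) ^ (m1 + 1) ≤ I := by
    rw [hI]; exact le_sup_of_le_left le_sup_left
  have hLle : (Ideal.span {X 2, X 3} : Ideal (MvPolynomial (Fin 4) k)) ^ n2 ≤ I := by
    rw [hI]; exact le_sup_of_le_left le_sup_right
  have hX0K : (X 0 : MvPolynomial (Fin 4) k) ∈ Ideal.span {X 0, X 1} :=
    Ideal.subset_span (by simp)
  have hxA1 : X 0 * A1 ∈ I := by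
    apply hKle
    rw [pow_succ']
    exact Ideal.mul_mem_mul hX0K hA1
  have hxB1 : X 0 * B1 ∈ I := by
    apply hKle
    rw [pow_succ']
    exact Ideal.mul_mem_mul hX0K hB1
  have hxA2 : X 0 * A2 ∈ I := Ideal.mul_mem_left _ _ (hLle hA2)
  have hxB2 : X 0 * B2 ∈ I := Ideal.mul_mem_left _ _ (hLle hB2)
  -- assemble the answer
  refine ⟨Ideal.Quotient.mk I (A1 + A2), Ideal.Quotient.mk I (-(B1 + B2)),
    Ideal.Quotient.mk I C, Ideal.Quotient.mk I (-G), ?_, ?_, ?_, ?_⟩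
  · rw [← map_mul, Ideal.Quotient.eq_zero_iff_mem]
    have : X 0 * (A1 + A2) = X 0 * A1 + X 0 * A2 := by ring
    rw [this]
    exact add_mem hxA1 hxA2
  · rw [← map_mul, Ideal.Quotient.eq_zero_iff_mem]
    have : X 0 * (-(B1 + B2)) = -(X 0 * B1) + -(X 0 * B2) := by ring
    rw [this]
    exact add_mem (neg_mem hxB1) (neg_mem hxB2)
  · have hPeq : P = (A1 + A2) + X 0 * C + X 3 * (-G) := by
      linear_combination hC
    rw [← hP, hPeq, map_add, map_add, map_mul, map_mul]
  · have hQeq : Q = (-(B1 + B2)) + X 1 * C + X 2 * (-G) := by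
      linear_combination hT
    rw [← hQ, hQeq, map_add, map_add, map_mul, map_mul]
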